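/- For the α-Rényi divergence with α > 1 between two Gaussians with equal covariance: D_α(N(μ₁, Σ) ‖ N(μ₂, Σ)) = (α/2)(μ₁ − μ₂)ᵀ Σ⁻¹ (μ₁ − μ₂). -/

import Mathlib

open MeasureTheory Matrix Real

noncomputable def gaussPDF (d : ℕ) (S : Matrix (Fin d) (Fin d) ℝ)
    (μ : Fin d → ℝ) (x : Fin d → ℝ) : ℝ :=
  (Real.sqrt ((2 * Real.pi) ^ d * S.det))⁻¹ *
    Real.exp (-(1 / 2) * ((x - μ) ⬝ᵥ (S⁻¹ *ᵥ (x - μ))))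

lemma quad_id_renyi (d : ℕ) (A : Matrix (Fin d) (Fin d) ℝ) (x μ₁ μ₂ : Fin d → ℝ) (α : ℝ) :
    α * ((x - μ₁) ⬝ᵥ (A *ᵥ (x - μ₁))) + (1 - α) * ((x - μ₂) ⬝ᵥ (A *ᵥ (x - μ₂))) =
      ((x - (μ₂ + α • (μ₁ - μ₂))) ⬝ᵥ (A *ᵥ (x - (μ₂ + α • (μ₁ - μ₂))))) +
        α * (1 - α) * ((μ₁ - μ₂) ⬝ᵥ (A *ᵥ (μ₁ - μ₂))) := by
  simp only [mulVec_sub, mulVec_add, mulVec_smul, dotProduct_sub, dotProduct_add,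
    dotProduct_smul, sub_dotProduct, add_dotProduct, smul_dotProduct, smul_eq_mul]
  ring

lemma comp_mulVec_integral (d : ℕ) (B : Matrix (Fin d) (Fin d) ℝ) (hdetB : B.det ≠ 0)
    (g : (Fin d → ℝ) → ℝ) :
    ∫ x : Fin d → ℝ, g x = |B.det| * ∫ x : Fin d → ℝ, g (B *ᵥ x) := by
  have hld : LinearMap.det (Matrix.toLin' B) ≠ 0 := by rwa [LinearMap.det_toLin']
  let e : (Fin d → ℝ) ≃ᵐ (Fin d → ℝ) :=
    ((Matrix.toLin' B).equivOfDetNeZero hld).toContinuousLinearEquiv.toHomeomorph.toMeasurableEquiv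
  have hecoe : ⇑e = ⇑(Matrix.toLin' B) := rfl
  have hmap : Measure.map e volume
      = ENNReal.ofReal |B.det|⁻¹ • (volume : Measure (Fin d → ℝ)) := by
    rw [hecoe, Real.map_matrix_volume_pi_eq_smul_volume_pi hdetB, abs_inv]
  have h1 : ∫ x : Fin d → ℝ, g (B *ᵥ x) = ∫ y, g y ∂(Measure.map e volume) := by
    rw [MeasureTheory.integral_map_equiv]
    simp [hecoe, Matrix.toLin'_apply]
  rw [h1, hmap, integral_smul_measure]
  have h2 : (ENNReal.ofReal |B.det|⁻¹).toReal = |B.det|⁻¹ :=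
    ENNReal.toReal_ofReal (by positivity)
  rw [h2, smul_eq_mul, ← mul_assoc, mul_inv_cancel₀ (by simpa using hdetB), one_mul]

lemma std_gauss_integral (d : ℕ) :
    ∫ x : Fin d → ℝ, Real.exp (-(1/2 : ℝ) * (x ⬝ᵥ x)) = Real.sqrt (2 * π) ^ d := by
  have h : ∀ x : Fin d → ℝ, Real.exp (-(1/2 : ℝ) * (x ⬝ᵥ x))
      = ∏ i, Real.exp (-(1/2 : ℝ) * (x i ^ 2)) := by
    intro x
    rw [← Real.exp_sum]
    congr 1
    simp [dotProduct, Finset.mul_sum, sq]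
  simp_rw [h]
  rw [MeasureTheory.volume_pi, MeasureTheory.integral_fintype_prod_eq_pow (ι := Fin d)
    (fun t : ℝ => Real.exp (-(1/2 : ℝ) * t ^ 2)), Fintype.card_fin]
  congr 1
  rw [integral_gaussian]
  rw [show π / (1/2 : ℝ) = 2 * π by ring]

open scoped MatrixOrder in
lemma integral_gaussPDF (d : ℕ) (S : Matrix (Fin d) (Fin d) ℝ) (hS : S.PosDef)
    (μ : Fin d → ℝ) : ∫ x : Fin d → ℝ, gaussPDF d S μ x = 1 := by
  classical
  set B := CFC.sqrt S with hBdef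
  have hBB : B * B = S := CFC.sqrt_mul_sqrt_self S hS.posSemidef.nonneg
  have hdetBB : B.det * B.det = S.det := by rw [← det_mul, hBB]
  have hdetS : 0 < S.det := hS.det_pos
  have hdetB : B.det ≠ 0 := by
    intro h; rw [h, mul_zero] at hdetBB; exact hdetS.ne hdetBB
  have hBsymm : Bᵀ = B := by
    have := (CFC.sqrt_nonneg S).posSemidef.isHermitian
    simpa [Matrix.IsHermitian, conjTranspose_eq_transpose_of_trivial] using this
  have hBunit : IsUnit B.det := isUnit_iff_ne_zero.mpr hdetB
  have hkey : Bᵀ * (S⁻¹ * B) = 1 := by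
    rw [hBsymm, ← hBB, Matrix.mul_inv_rev, Matrix.mul_assoc,
      Matrix.nonsing_inv_mul B hBunit, Matrix.mul_one, Matrix.mul_nonsing_inv B hBunit]
  have hquad : ∀ x : Fin d → ℝ, (B *ᵥ x) ⬝ᵥ (S⁻¹ *ᵥ (B *ᵥ x)) = x ⬝ᵥ x := by
    intro x
    rw [mulVec_mulVec]
    have h1 : B *ᵥ x = x ᵥ* Bᵀ := by rw [← Matrix.mulVec_transpose, transpose_transpose]
    rw [dotProduct_mulVec, h1, vecMul_vecMul, hkey, vecMul_one]
  have h2π : (0:ℝ) ≤ 2 * π := by positivity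
  unfold gaussPDF
  rw [MeasureTheory.integral_const_mul]
  have htrans : ∫ x : Fin d → ℝ, Real.exp (-(1/2 : ℝ) * ((x - μ) ⬝ᵥ (S⁻¹ *ᵥ (x - μ))))
      = ∫ x : Fin d → ℝ, Real.exp (-(1/2 : ℝ) * (x ⬝ᵥ (S⁻¹ *ᵥ x))) :=
    integral_sub_right_eq_self (fun y => Real.exp (-(1/2 : ℝ) * (y ⬝ᵥ (S⁻¹ *ᵥ y)))) μ
  rw [htrans, comp_mulVec_integral d B hdetB (fun y => Real.exp (-(1/2 : ℝ) * (y ⬝ᵥ (S⁻¹ *ᵥ y))))]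
  simp only [hquad]
  rw [std_gauss_integral d]
  have habs : |B.det| = Real.sqrt S.det := by
    rw [← Real.sqrt_mul_self_eq_abs, hdetBB]
  have hsqrtpow : Real.sqrt ((2 * π) ^ d) = Real.sqrt (2 * π) ^ d := by
    rw [show (2*π)^d = (Real.sqrt (2*π)^d)^2 by
        rw [← pow_mul, pow_mul', Real.sq_sqrt h2π]]
    exact Real.sqrt_sq (by positivity)
  rw [habs, Real.sqrt_mul (by positivity) S.det, hsqrtpow]
  field_simp

/-- α-Rényi divergence between Gaussians with equal covariance. -/
theorem renyi_gaussians_same_cov (d : ℕ) (S : Matrix (Fin d) (Fin d) ℝ)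
    (hS : S.PosDef) (hSsymm : S.IsSymm) (μ₁ μ₂ : Fin d → ℝ)
    (α : ℝ) (hα : 1 < α) :
    (1 / (α - 1)) *
        Real.log (∫ x : Fin d → ℝ,
          (gaussPDF d S μ₁ x / gaussPDF d S μ₂ x) ^ α * gaussPDF d S μ₂ x) =
      (α / 2) * ((μ₁ - μ₂) ⬝ᵥ (S⁻¹ *ᵥ (μ₁ - μ₂))) := by
  have hC : (0:ℝ) < Real.sqrt ((2 * Real.pi) ^ d * S.det) := by
    apply Real.sqrt_pos.mpr
    have := hS.det_pos
    positivity
  set Δ : ℝ := (μ₁ - μ₂) ⬝ᵥ (S⁻¹ *ᵥ (μ₁ - μ₂)) with hΔ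
  set ν : Fin d → ℝ := μ₂ + α • (μ₁ - μ₂) with hν
  have key : ∀ x : Fin d → ℝ,
      (gaussPDF d S μ₁ x / gaussPDF d S μ₂ x) ^ α * gaussPDF d S μ₂ x
        = Real.exp (α * (α - 1) / 2 * Δ) * gaussPDF d S ν x := by
    intro x
    unfold gaussPDF
    rw [mul_div_mul_left _ _ (inv_ne_zero hC.ne')]
    rw [div_eq_mul_inv, ← Real.exp_neg, ← Real.exp_add, ← Real.exp_mul]
    rw [mul_left_comm, mul_left_comm (Real.exp (α * (α - 1) / 2 * Δ)),
      ← Real.exp_add, ← Real.exp_add]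
    congr 1
    congr 1
    have h := quad_id_renyi d S⁻¹ x μ₁ μ₂ α
    rw [← hν] at h
    linear_combination (-(1/2 : ℝ)) * h
  simp only [key]
  rw [MeasureTheory.integral_const_mul, integral_gaussPDF d S hS ν, mul_one, Real.log_exp]
  have h1 : α - 1 ≠ 0 := by linarith
  field_simp
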